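/- Let z ∈ ℝⁿ with n ≥ 1, and let f₁(λ) = ‖S(z,λ)‖₁ + λ. Then for every λ ≥ 0, f₁(λ) ≥ ‖z‖_∞, with equality attained at λ = ‖z‖_∞ if the maximal absolute entry of z is unique; in particular the minimum value of f₁ over λ ≥ 0 equals ‖z‖_∞. -/

import Mathlib

noncomputable def softTh (x t : ℝ) : ℝ := Real.sign x * max (|x| - t) 0

lemma abs_softTh (x t : ℝ) (ht : 0 ≤ t) : |softTh x t| = max (|x| - t) 0 := by
  unfold softTh
  rcases lt_trichotomy x 0 with h | h | h
  · rw [Real.sign_of_neg h, abs_mul]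
    simp [abs_of_nonneg (le_max_right (|x| - t) 0)]
  · subst h; simp [Real.sign_zero, max_eq_right (by linarith : -t ≤ 0)]
  · rw [Real.sign_of_pos h, abs_mul]
    simp [abs_of_nonneg (le_max_right (|x| - t) 0)]

theorem stmt_4 (n : ℕ) (hn : 1 ≤ n) (z : Fin n → ℝ) :
    (∀ lam : ℝ, 0 ≤ lam → (⨆ k, |z k|) ≤ (∑ k, |softTh (z k) lam|) + lam) ∧
    ((∃! k : Fin n, |z k| = ⨆ k, |z k|) →
      (∑ k, |softTh (z k) (⨆ k, |z k|)|) + (⨆ k, |z k|) = ⨆ k, |z k|) ∧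
    sInf ((fun lam => (∑ k, |softTh (z k) lam|) + lam) '' Set.Ici (0:ℝ)) = ⨆ k, |z k| := by
  haveI : Nonempty (Fin n) := ⟨⟨0, hn⟩⟩
  set M := ⨆ k, |z k| with hM
  have hbdd : BddAbove (Set.range fun k => |z k|) := Set.Finite.bddAbove (Set.finite_range _)
  have hle : ∀ k, |z k| ≤ M := fun k => le_ciSup hbdd k
  have hM0 : 0 ≤ M := le_trans (abs_nonneg _) (hle (Classical.arbitrary _))
  have h1 : ∀ lam : ℝ, 0 ≤ lam → M ≤ (∑ k, |softTh (z k) lam|) + lam := by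
    intro lam hlam
    apply ciSup_le
    intro k
    have : |z k| ≤ |softTh (z k) lam| + lam := by
      rw [abs_softTh _ _ hlam]
      linarith [le_max_left (|z k| - lam) (0:ℝ)]
    refine this.trans (add_le_add_left ?_ lam)
    exact Finset.single_le_sum (f := fun i => |softTh (z i) lam|)
      (fun i _ => abs_nonneg _) (Finset.mem_univ k)
  have hsum0 : (∑ k, |softTh (z k) M|) = 0 := by
    apply Finset.sum_eq_zero
    intro k _
    rw [abs_softTh _ _ hM0, max_eq_right (by linarith [hle k])]
  refine ⟨h1, fun _ => by rw [hsum0, zero_add], ?_⟩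
  apply le_antisymm
  · apply csInf_le
    · exact ⟨M, fun y ⟨lam, hlam, hy⟩ => hy ▸ h1 lam hlam⟩
    · exact ⟨M, hM0, by simp [hsum0]⟩
  · exact le_csInf ⟨M, ⟨M, hM0, by simp [hsum0]⟩⟩ fun y ⟨lam, hlam, hy⟩ => hy ▸ h1 lam hlam
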